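/- Let X ∈ FT_n(M) be nilpotent, c an integer, and γ ∈ M with v_M(γ) = c. Then v_M(γX) ≥ min(c/(n-1), c) + v_M(X). -/

import Mathlib

/-- The set `FT_n(M)`: upper triangular matrices whose diagonal entries all equal a common
element of the prime field `𝔽_p`. -/
def IsFT (p : ℕ) {n : ℕ} {M : Type*} [Field M] (X : Matrix (Fin n) (Fin n) M) : Prop :=
  (∀ i j : Fin n, j < i → X i j = 0) ∧ ∃ c : ZMod p, ∀ i : Fin n, X i i = ZMod.cast c

/-- The matrix valuation `v_M(X) = min_{i<j} v_M(x_{i,j})/(j-i)`, with values in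
`ℚ ∪ {+∞}`. -/
noncomputable def vmat {n : ℕ} {M : Type*} [Field M] (v : AddValuation M (WithTop ℤ))
    (X : Matrix (Fin n) (Fin n) M) : WithTop ℚ :=
  Finset.univ.inf fun ij : Fin n × Fin n =>
    if ij.1 < ij.2 then
      WithTop.map (fun z : ℤ => (z : ℚ) / ((ij.2 : ℚ) - (ij.1 : ℚ))) (v (X ij.1 ij.2))
    else ⊤

/-- The matrix valuation `ṽ_M(X)`: same as `v_M(X)` but omitting the `(1,n)` entry. -/
noncomputable def vtil {n : ℕ} {M : Type*} [Field M] (v : AddValuation M (WithTop ℤ))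
    (X : Matrix (Fin n) (Fin n) M) : WithTop ℚ :=
  Finset.univ.inf fun ij : Fin n × Fin n =>
    if ij.1 < ij.2 ∧ ¬((ij.1 : ℕ) = 0 ∧ (ij.2 : ℕ) = n - 1) then
      WithTop.map (fun z : ℤ => (z : ℚ) / ((ij.2 : ℚ) - (ij.1 : ℚ))) (v (X ij.1 ij.2))
    else ⊤

/-- Let `X ∈ FT_n(M)` be nilpotent, `c` an integer and `γ ∈ M` with
`v_M(γ) = c`.  Then `v_M(γX) ≥ min(c/(n-1), c) + v_M(X)`. -/
lemma min_div_le_aux {c N d : ℚ} (hN : 1 ≤ N) (hd1 : 1 ≤ d) (hdN : d ≤ N) :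
    min (c / N) c ≤ c / d := by
  rcases le_total 0 c with hc | hc
  · exact le_trans (min_le_left _ _) (div_le_div_of_nonneg_left hc (by linarith) hdN)
  · refine le_trans (min_le_right _ _) ?_
    rw [le_div_iff₀ (by linarith : (0:ℚ) < d)]
    nlinarith

theorem vmat_smul_ge {p n : ℕ} (hp : p.Prime) (hn : 2 ≤ n) {M : Type*} [Field M] [CharP M p]
    (v : AddValuation M (WithTop ℤ)) (X : Matrix (Fin n) (Fin n) M)
    (hX : IsFT p X) (hXnil : ∀ i j : Fin n, j ≤ i → X i j = 0)
    (c : ℤ) (γ : M) (hγ : v γ = (c : WithTop ℤ)) :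
    ((min ((c : ℚ) / ((n : ℚ) - 1)) (c : ℚ) : ℚ) : WithTop ℚ) + vmat v X ≤
      vmat v (γ • X) := by
  set a : ℚ := min ((c : ℚ) / ((n : ℚ) - 1)) (c : ℚ) with ha
  rw [vmat]
  apply Finset.le_inf
  rintro ⟨i, j⟩ -
  dsimp only
  by_cases hij : i < j
  · rw [if_pos hij]
    set d : ℚ := (j : ℚ) - (i : ℚ) with hd
    have hd1 : 1 ≤ d := by
      have : (i : ℕ) + 1 ≤ (j : ℕ) := hij
      have : ((i : ℕ) : ℚ) + 1 ≤ ((j : ℕ) : ℚ) := by exact_mod_cast this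
      simp [hd]; linarith
    have hdN : d ≤ (n : ℚ) - 1 := by
      have hj : (j : ℕ) ≤ n - 1 := Nat.le_sub_one_of_lt j.isLt
      have hj' : ((j : ℕ) : ℚ) ≤ (n : ℚ) - 1 := by
        have : ((j : ℕ) : ℚ) ≤ ((n - 1 : ℕ) : ℚ) := by exact_mod_cast hj
        rwa [Nat.cast_sub (by omega), Nat.cast_one] at this
      have hi : (0 : ℚ) ≤ ((i : ℕ) : ℚ) := by positivity
      simp only [hd]; linarith
    have hmin : a ≤ (c : ℚ) / d :=
      min_div_le_aux (by
        have : (2 : ℚ) ≤ (n : ℚ) := by exact_mod_cast hn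
        linarith) hd1 hdN
    have hinf : vmat v X ≤
        WithTop.map (fun z : ℤ => (z : ℚ) / d) (v (X i j)) := by
      have h := Finset.inf_le (f := fun ij : Fin n × Fin n =>
        if ij.1 < ij.2 then
          WithTop.map (fun z : ℤ => (z : ℚ) / ((ij.2 : ℚ) - (ij.1 : ℚ))) (v (X ij.1 ij.2))
        else ⊤) (Finset.mem_univ (i, j))
      rw [vmat]
      simpa [hij] using h
    have hmul : v ((γ • X) i j) = (c : WithTop ℤ) + v (X i j) := by
      simp only [Matrix.smul_apply, smul_eq_mul]
      rw [v.map_mul, hγ]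
    rcases eq_or_ne (v (X i j)) ⊤ with hv | hv
    · rw [hmul, hv]
      simp
    · obtain ⟨z, hz⟩ : ∃ z : ℤ, v (X i j) = (z : WithTop ℤ) := by
        cases h : v (X i j) with
        | top => exact absurd h hv
        | coe z => exact ⟨z, rfl⟩
      rw [hmul, hz]
      rw [hz] at hinf
      have h1 : (a : WithTop ℚ) + vmat v X ≤ (a : WithTop ℚ) + ((z : ℚ) / d : ℚ) := by
        apply add_le_add_right
        simpa using hinf
      refine h1.trans ?_
      have : ((c : WithTop ℤ) + (z : WithTop ℤ)) = ((c + z : ℤ) : WithTop ℤ) := by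
        exact_mod_cast rfl
      rw [this]
      simp only [WithTop.map_coe]
      rw [← WithTop.coe_add, WithTop.coe_le_coe]
      have : ((c + z : ℤ) : ℚ) / d = (c : ℚ) / d + (z : ℚ) / d := by
        push_cast
        ring
      rw [this]
      linarith
  · rw [if_neg hij]
    exact le_top
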